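/- Let L_1,L_2 be functions regularly varying at infinity with indices β_1,β_2∈ℝ respectively, and let Z_1,Z_2 be independent real random variables with P(e^{Z_i}>u) ~ L_i(u)Ψ(log u) as u→∞ for i=1,2, and let σ_1,σ_2>0. Then for every a>0, P(e^{σ_1Z_1+σ_2Z_2}>u) ~ P(e^{σ_1Z_1+σ_2Z_2}>u, e^{σ_1Z_1}>a, e^{σ_2Z_2}>a) as u→∞. -/

import Mathlib

open MeasureTheory ProbabilityTheory Filter Real Set

/-- Survival function of the standard normal distribution: `Ψ x = P(Z > x)` for `Z ~ N(0,1)`. -/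
noncomputable def stdGaussianSurvival (x : ℝ) : ℝ :=
  ((gaussianReal 0 1) (Set.Ioi x)).toReal

/-- `L` is regularly varying at infinity with index `β`. -/
def RegVary (L : ℝ → ℝ) (β : ℝ) : Prop :=
  ∀ l : ℝ, 0 < l → Tendsto (fun u => L (l * u) / L u) atTop (nhds (l ^ β))

/-- Asymptotic equivalence at infinity: `f u / g u → 1` as `u → ∞`. -/
def AsymEquiv (f g : ℝ → ℝ) : Prop :=
  Tendsto (fun u => f u / g u) atTop (nhds 1)

lemma psi_eq (x : ℝ) :
    stdGaussianSurvival x = ∫ t in Set.Ioi x, gaussianPDFReal 0 1 t := by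
  rw [stdGaussianSurvival, gaussianReal_apply_eq_integral 0 one_ne_zero (Set.Ioi x),
    ENNReal.toReal_ofReal]
  exact setIntegral_nonneg measurableSet_Ioi fun t _ => gaussianPDFReal_nonneg 0 1 t

lemma psi_pos (x : ℝ) : 0 < stdGaussianSurvival x := by
  rw [psi_eq]
  refine (setIntegral_pos_iff_support_of_nonneg_ae ?_ ?_).2 ?_
  · exact ae_of_all _ fun t => gaussianPDFReal_nonneg 0 1 t
  · exact (integrable_gaussianPDFReal 0 1).restrict
  · have h : Function.support (gaussianPDFReal 0 1) = Set.univ := by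
      ext t; simp [Function.mem_support, (gaussianPDFReal_pos 0 1 t one_ne_zero).ne']
    rw [h, Set.univ_inter]
    simp [Real.volume_Ioi]

lemma integral_exp_neg_mul_Ioi {b : ℝ} (hb : 0 < b) (a : ℝ) :
    ∫ t in Set.Ioi a, Real.exp (-b * t) = Real.exp (-b * a) / b := by
  have h := integral_comp_mul_left_Ioi (fun x => Real.exp (-x)) a hb
  simp only [smul_eq_mul, neg_mul] at h ⊢
  rw [h, integral_exp_neg_Ioi, inv_mul_eq_div]

lemma psi_le {y : ℝ} (hy : 0 < y) :
    stdGaussianSurvival y ≤ gaussianPDFReal 0 1 y / y := by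
  rw [psi_eq]
  have hint := (exp_neg_integrableOn_Ioi y hy).const_mul
      (gaussianPDFReal 0 1 y * Real.exp (y * y))
  have hle : ∀ t ∈ Set.Ioi y, gaussianPDFReal 0 1 t ≤
      gaussianPDFReal 0 1 y * Real.exp (y * y) * Real.exp (-y * t) := by
    intro t ht
    rw [Set.mem_Ioi] at ht
    simp only [gaussianPDFReal, sub_zero, NNReal.coe_one, mul_one]
    rw [mul_assoc, mul_assoc, ← Real.exp_add, ← Real.exp_add]
    refine mul_le_mul_of_nonneg_left (Real.exp_le_exp.2 ?_) (by positivity)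
    nlinarith [sq_nonneg (t - y)]
  calc ∫ t in Set.Ioi y, gaussianPDFReal 0 1 t
      ≤ ∫ t in Set.Ioi y, gaussianPDFReal 0 1 y * Real.exp (y * y) * Real.exp (-y * t) :=
        setIntegral_mono_on (integrable_gaussianPDFReal 0 1).restrict hint measurableSet_Ioi hle
    _ = gaussianPDFReal 0 1 y * Real.exp (y * y) * (Real.exp (-y * y) / y) := by
        rw [integral_const_mul, integral_exp_neg_mul_Ioi hy]
    _ = gaussianPDFReal 0 1 y / y := by
        rw [mul_assoc, mul_div_assoc', ← Real.exp_add]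
        simp only [neg_mul, add_neg_cancel, Real.exp_zero, mul_one]
        rw [mul_one_div]

lemma psi_ge {x : ℝ} (c : ℝ) (hx : 0 ≤ x) (hc : 0 < c) :
    c * gaussianPDFReal 0 1 (x + c) ≤ stdGaussianSurvival x := by
  rw [psi_eq]
  have h1 : c * gaussianPDFReal 0 1 (x + c)
      = ∫ _t in Set.Ioc x (x + c), gaussianPDFReal 0 1 (x + c) := by
    rw [setIntegral_const, measureReal_def, Real.volume_Ioc, smul_eq_mul]
    rw [ENNReal.toReal_ofReal (by linarith)]
    ring_nf
  rw [h1]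
  have h2 : ∫ _t in Set.Ioc x (x + c), gaussianPDFReal 0 1 (x + c)
      ≤ ∫ t in Set.Ioc x (x + c), gaussianPDFReal 0 1 t := by
    refine setIntegral_mono_on (integrableOn_const (ne_of_lt ?_))
      (integrable_gaussianPDFReal 0 1).restrict measurableSet_Ioc ?_
    · rw [Real.volume_Ioc]; exact ENNReal.ofReal_lt_top
    · intro t ht
      simp only [Set.mem_Ioc] at ht
      simp only [gaussianPDFReal, sub_zero, NNReal.coe_one, mul_one]
      refine mul_le_mul_of_nonneg_left (Real.exp_le_exp.2 ?_) (by positivity)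
      nlinarith [ht.1, ht.2]
  refine h2.trans ?_
  refine setIntegral_mono_set (integrable_gaussianPDFReal 0 1).restrict
    (ae_of_all _ fun t => gaussianPDFReal_nonneg 0 1 t) (HasSubset.Subset.eventuallyLE ?_)
  exact Set.Ioc_subset_Ioi_self

lemma psi_ratio {c : ℝ} (hc : 0 < c) :
    Tendsto (fun x => stdGaussianSurvival (x + c) / stdGaussianSurvival x) atTop (nhds 0) := by
  have h0 : Tendsto (fun x : ℝ => 1 / (c * (x + c))) atTop (nhds 0) := by
    simp only [one_div]
    exact Tendsto.comp tendsto_inv_atTop_zero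
      ((tendsto_atTop_add_const_right _ c tendsto_id).const_mul_atTop hc)
  refine squeeze_zero' ?_ ?_ h0
  · exact Eventually.of_forall fun x => div_nonneg (psi_pos _).le (psi_pos _).le
  · filter_upwards [eventually_ge_atTop (0 : ℝ)] with x hx
    have h1 := psi_le (y := x + c) (by linarith)
    have h2 := psi_ge c hx hc
    have hphi : 0 < gaussianPDFReal 0 1 (x + c) := gaussianPDFReal_pos 0 1 _ one_ne_zero
    calc stdGaussianSurvival (x + c) / stdGaussianSurvival x
        ≤ (gaussianPDFReal 0 1 (x + c) / (x + c)) / (c * gaussianPDFReal 0 1 (x + c)) :=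
          div_le_div₀ (by positivity) h1 (by positivity) h2
      _ = 1 / (c * (x + c)) := by
          field_simp

lemma asym_lower {F M : ℝ → ℝ} (hAs : AsymEquiv F M) (hMpos : ∀ᶠ u in atTop, 0 < M u) :
    ∀ᶠ u in atTop, (1/2) * M u ≤ F u := by
  filter_upwards [hAs.eventually (eventually_ge_nhds (by norm_num : (1:ℝ)/2 < 1)), hMpos]
    with u h1 h2
  have := (le_div_iff₀ h2).1 h1
  linarith

lemma asym_upper {F M : ℝ → ℝ} (hAs : AsymEquiv F M) (hMpos : ∀ᶠ u in atTop, 0 < M u) :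
    ∀ᶠ u in atTop, F u ≤ 2 * M u := by
  filter_upwards [hAs.eventually (eventually_le_nhds (by norm_num : (1:ℝ) < 2)), hMpos]
    with u h1 h2
  have := (div_le_iff₀ h2).1 h1
  linarith

lemma tail_ratio_zero (F Lf : ℝ → ℝ) (β : ℝ)
    (hLpos : ∀ u > (0:ℝ), 0 < Lf u) (hL : RegVary Lf β)
    (hAs : AsymEquiv F (fun u => Lf u * stdGaussianSurvival (Real.log u)))
    {l : ℝ} (hl : 1 < l) :
    Tendsto (fun u => F (l * u) / F u) atTop (nhds 0) := by
  set M : ℝ → ℝ := fun u => Lf u * stdGaussianSurvival (Real.log u) with hMdef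
  have hl0 : 0 < l := lt_trans one_pos hl
  have hmul : Tendsto (fun u : ℝ => l * u) atTop atTop := tendsto_id.const_mul_atTop hl0
  have hMpos : ∀ᶠ u in atTop, 0 < M u := by
    filter_upwards [eventually_gt_atTop (0:ℝ)] with u hu
    exact mul_pos (hLpos u hu) (psi_pos _)
  have hlow : ∀ᶠ u in atTop, (1/2) * M u ≤ F u := asym_lower hAs hMpos
  have hup : ∀ᶠ u in atTop, F u ≤ 2 * M u := asym_upper hAs hMpos
  have hG : Tendsto (fun u => 4 * ((Lf (l * u) / Lf u) *
      (stdGaussianSurvival (Real.log u + Real.log l) / stdGaussianSurvival (Real.log u))))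
      atTop (nhds 0) := by
    have h1 := (hL l hl0).mul (((psi_ratio (Real.log_pos hl)).comp tendsto_log_atTop))
    rw [mul_zero] at h1
    simpa using h1.const_mul 4
  refine squeeze_zero' ?_ ?_ hG
  · filter_upwards [hlow, hmul.eventually hlow, hMpos, hmul.eventually hMpos]
      with u h1 h2 h3 h4
    exact div_nonneg (by nlinarith) (by nlinarith)
  · filter_upwards [hlow, hmul.eventually hup, hMpos, hmul.eventually hMpos,
      eventually_gt_atTop (0:ℝ)] with u h1 h2 h3 h4 hu
    have hMne : M u ≠ 0 := h3.ne'
    have hMlogeq : Real.log (l * u) = Real.log u + Real.log l := by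
      rw [Real.log_mul hl0.ne' hu.ne', add_comm]
    calc F (l * u) / F u ≤ (2 * M (l * u)) / ((1/2) * M u) :=
          div_le_div₀ (by nlinarith) h2 (by nlinarith) h1
      _ = 4 * ((Lf (l * u) / Lf u) *
          (stdGaussianSurvival (Real.log u + Real.log l) / stdGaussianSurvival (Real.log u))) := by
          rw [hMdef]
          simp only [hMlogeq]
          field_simp
          ring

lemma exp_mul_lt_iff {v σ z : ℝ} (hv : 0 < v) (hσ : 0 < σ) :
    v ^ (1/σ) < Real.exp z ↔ v < Real.exp (σ * z) := by
  rw [← Real.log_lt_iff_lt_exp hv, ← Real.log_lt_iff_lt_exp (Real.rpow_pos_of_pos hv _), Real.log_rpow hv,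
    one_div, inv_mul_lt_iff₀ hσ]

lemma tail_event_pos {Ω : Type*} [MeasurableSpace Ω] (P : Measure Ω) [IsProbabilityMeasure P]
    (W : Ω → ℝ) (LW : ℝ → ℝ)
    (hLWpos : ∀ u > (0:ℝ), 0 < LW u)
    (hW_tail : AsymEquiv (fun u => (P {ω | u < Real.exp (W ω)}).toReal)
      (fun u => LW u * stdGaussianSurvival (Real.log u))) :
    ∀ᶠ v in atTop, 0 < (P {ω | v < Real.exp (W ω)}).toReal := by
  have hMpos : ∀ᶠ u in atTop, 0 < LW u * stdGaussianSurvival (Real.log u) := by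
    filter_upwards [eventually_gt_atTop (0:ℝ)] with u hu
    exact mul_pos (hLWpos u hu) (psi_pos _)
  filter_upwards [asym_lower hW_tail hMpos, hMpos] with v h1 h2
  nlinarith

lemma tail_level_pos {Ω : Type*} [MeasurableSpace Ω] (P : Measure Ω) [IsProbabilityMeasure P]
    (W : Ω → ℝ) (LW : ℝ → ℝ)
    (hLWpos : ∀ u > (0:ℝ), 0 < LW u)
    (hW_tail : AsymEquiv (fun u => (P {ω | u < Real.exp (W ω)}).toReal)
      (fun u => LW u * stdGaussianSurvival (Real.log u)))
    (q : ℝ) : 0 < (P {ω | q < Real.exp (W ω)}).toReal := by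
  obtain ⟨v, hv1, hv2⟩ := ((tail_event_pos P W LW hLWpos hW_tail).and
    (eventually_ge_atTop q)).exists
  refine lt_of_lt_of_le hv1 (ENNReal.toReal_mono (measure_ne_top P _) (measure_mono ?_))
  intro ω hω
  exact lt_of_le_of_lt hv2 hω

lemma side_ratio {Ω : Type*} [MeasurableSpace Ω] (P : Measure Ω) [IsProbabilityMeasure P]
    (W V : Ω → ℝ) (hWmeas : Measurable W) (hVmeas : Measurable V)
    (hind : ProbabilityTheory.IndepFun W V P)
    (LW LV : ℝ → ℝ) (βV : ℝ)
    (hLWpos : ∀ u > (0:ℝ), 0 < LW u) (hLVpos : ∀ u > (0:ℝ), 0 < LV u)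
    (hLV : RegVary LV βV)
    (hW_tail : AsymEquiv (fun u => (P {ω | u < Real.exp (W ω)}).toReal)
      (fun u => LW u * stdGaussianSurvival (Real.log u)))
    (hV_tail : AsymEquiv (fun u => (P {ω | u < Real.exp (V ω)}).toReal)
      (fun u => LV u * stdGaussianSurvival (Real.log u)))
    (σW σV : ℝ) (hσW : 0 < σW) (hσV : 0 < σV) (a : ℝ) (ha : 0 < a) :
    Tendsto (fun u => (P {ω | (u/a) ^ (1/σV) < Real.exp (V ω)}).toReal /
      (P {ω | u < Real.exp (σW * W ω + σV * V ω)}).toReal) atTop (nhds 0)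
    ∧ ∀ᶠ u in atTop, 0 < (P {ω | u < Real.exp (σW * W ω + σV * V ω)}).toReal := by
  set FV : ℝ → ℝ := fun v => (P {ω | v < Real.exp (V ω)}).toReal with hFVdef
  set f : ℝ → ℝ := fun u => (P {ω | u < Real.exp (σW * W ω + σV * V ω)}).toReal with hfdef
  set q : ℝ := (2*a) ^ (1/σW) with hqdef
  set cW : ℝ := (P {ω | q < Real.exp (W ω)}).toReal with hcWdef
  have hcW : 0 < cW := tail_level_pos P W LW hLWpos hW_tail q
  set m : ℝ → ℝ := fun u => (u/(2*a)) ^ (1/σV) with hmdef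
  have hm : Tendsto m atTop atTop :=
    (tendsto_rpow_atTop (by positivity)).comp (tendsto_id.atTop_div_const (by positivity))
  have hmsW : MeasurableSet {x : ℝ | q < Real.exp x} :=
    measurableSet_lt measurable_const Real.continuous_exp.measurable
  -- lower bound
  have hlowf : ∀ᶠ u in atTop, cW * FV (m u) ≤ f u := by
    filter_upwards [eventually_gt_atTop (0:ℝ)] with u hu
    have hsub : (W ⁻¹' {x | q < Real.exp x}) ∩ (V ⁻¹' {x | m u < Real.exp x})
        ⊆ {ω | u < Real.exp (σW * W ω + σV * V ω)} := by
      rintro ω ⟨h1, h2⟩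
      simp only [Set.mem_preimage, Set.mem_setOf_eq] at h1 h2 ⊢
      have e1 : 2*a < Real.exp (σW * W ω) := (exp_mul_lt_iff (by positivity) hσW).1 h1
      have e2 : u/(2*a) < Real.exp (σV * V ω) := (exp_mul_lt_iff (by positivity) hσV).1 h2
      rw [Real.exp_add]
      calc u = (2*a) * (u/(2*a)) := by field_simp
        _ < Real.exp (σW * W ω) * Real.exp (σV * V ω) :=
            mul_lt_mul'' e1 e2 (by positivity) (by positivity)
    have hprod := hind.measure_inter_preimage_eq_mul
      (s := {x : ℝ | q < Real.exp x}) (t := {x : ℝ | m u < Real.exp x}) hmsW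
      (measurableSet_lt measurable_const Real.continuous_exp.measurable)
    have hWset : W ⁻¹' {x | q < Real.exp x} = {ω | q < Real.exp (W ω)} := rfl
    have hVset : V ⁻¹' {x | m u < Real.exp x} = {ω | m u < Real.exp (V ω)} := rfl
    calc cW * FV (m u)
        = (P (W ⁻¹' {x | q < Real.exp x}) * P (V ⁻¹' {x | m u < Real.exp x})).toReal := by
          rw [ENNReal.toReal_mul, hWset, hVset]
      _ = (P (W ⁻¹' {x | q < Real.exp x} ∩ V ⁻¹' {x | m u < Real.exp x})).toReal := by
          rw [hprod]
      _ ≤ f u := ENNReal.toReal_mono (measure_ne_top P _) (measure_mono hsub)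
  have hFVpos : ∀ᶠ v in atTop, 0 < FV v := tail_event_pos P V LV hLVpos hV_tail
  have hfpos : ∀ᶠ u in atTop, 0 < f u := by
    filter_upwards [hlowf, hm.eventually hFVpos] with u h1 h2
    nlinarith
  refine ⟨?_, hfpos⟩
  have hl2 : (1:ℝ) < 2 ^ (1/σV) := by
    rw [show (1:ℝ) = 2 ^ (0:ℝ) by simp]
    exact Real.rpow_lt_rpow_left_iff (by norm_num) |>.2 (by positivity)
  have htr := tail_ratio_zero FV LV βV hLVpos hLV hV_tail hl2
  have htrm : Tendsto (fun u => (1/cW) * (FV ((2:ℝ) ^ (1/σV) * m u) / FV (m u)))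
      atTop (nhds 0) := by
    simpa using ((htr.comp hm).const_mul (1/cW))
  have hnum : ∀ᶠ u in atTop, (u/a) ^ (1/σV) = (2:ℝ) ^ (1/σV) * m u := by
    filter_upwards [eventually_gt_atTop (0:ℝ)] with u hu
    rw [hmdef]
    rw [← Real.mul_rpow (by norm_num) (by positivity)]
    congr 1
    field_simp
  refine squeeze_zero' ?_ ?_ htrm
  · filter_upwards [hfpos] with u h1
    exact div_nonneg ENNReal.toReal_nonneg h1.le
  · filter_upwards [hlowf, hnum, hm.eventually hFVpos, hfpos] with u h1 h2 h3 h4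
    have : (P {ω | (u/a) ^ (1/σV) < Real.exp (V ω)}).toReal
        = FV ((2:ℝ) ^ (1/σV) * m u) := by rw [hFVdef]; simp only [h2]
    rw [this, one_div cW, inv_mul_eq_div, div_div]
    rw [div_le_div_iff₀ h4 (by positivity)]
    have hnn : 0 ≤ FV ((2:ℝ) ^ (1/σV) * m u) := ENNReal.toReal_nonneg
    nlinarith

lemma sandwich_ratio {f g e₁ e₂ : ℝ → ℝ}
    (hgle : ∀ᶠ u in atTop, g u ≤ f u)
    (hkey : ∀ᶠ u in atTop, f u ≤ g u + (e₁ u + e₂ u))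
    (hfpos : ∀ᶠ u in atTop, 0 < f u)
    (h1 : Tendsto (fun u => e₁ u / f u) atTop (nhds 0))
    (h2 : Tendsto (fun u => e₂ u / f u) atTop (nhds 0)) :
    Tendsto (fun u => f u / g u) atTop (nhds 1) := by
  have hgf : Tendsto (fun u => g u / f u) atTop (nhds 1) := by
    have hlow : Tendsto (fun u => 1 - (e₁ u / f u + e₂ u / f u)) atTop (nhds 1) := by
      simpa using tendsto_const_nhds.sub (h1.add h2)
    refine tendsto_of_tendsto_of_tendsto_of_le_of_le' hlow tendsto_const_nhds ?_ ?_
    · filter_upwards [hkey, hfpos] with u hk hf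
      have step : (f u - (e₁ u + e₂ u)) / f u ≤ g u / f u :=
        (div_le_div_iff_of_pos_right hf).2 (by linarith)
      calc 1 - (e₁ u / f u + e₂ u / f u) = (f u - (e₁ u + e₂ u)) / f u := by
            field_simp
        _ ≤ g u / f u := step
    · filter_upwards [hgle, hfpos] with u hg hf
      exact (div_le_one hf).2 hg
  have hinv := hgf.inv₀ one_ne_zero
  rw [inv_one] at hinv
  refine hinv.congr fun u => ?_
  rw [inv_div]

/-- Equation (13): the tail of the product is dominated by the event where both
factors are large. -/
theorem product_lognormal_both_large
    {Ω : Type*} [MeasurableSpace Ω] (P : Measure Ω) [IsProbabilityMeasure P]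
    (L₁ L₂ : ℝ → ℝ) (β₁ β₂ : ℝ)
    (hL₁pos : ∀ u > (0 : ℝ), 0 < L₁ u) (hL₂pos : ∀ u > (0 : ℝ), 0 < L₂ u)
    (hL₁ : RegVary L₁ β₁) (hL₂ : RegVary L₂ β₂)
    (Z₁ Z₂ : Ω → ℝ) (hZ₁meas : Measurable Z₁) (hZ₂meas : Measurable Z₂)
    (hindep : IndepFun Z₁ Z₂ P)
    (hZ₁ : AsymEquiv (fun u => (P {ω | u < exp (Z₁ ω)}).toReal)
      (fun u => L₁ u * stdGaussianSurvival (log u)))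
    (hZ₂ : AsymEquiv (fun u => (P {ω | u < exp (Z₂ ω)}).toReal)
      (fun u => L₂ u * stdGaussianSurvival (log u)))
    (σ₁ σ₂ : ℝ) (hσ₁ : 0 < σ₁) (hσ₂ : 0 < σ₂) :
    ∀ a > (0 : ℝ),
      AsymEquiv
        (fun u => (P {ω | u < exp (σ₁ * Z₁ ω + σ₂ * Z₂ ω)}).toReal)
        (fun u => (P {ω | u < exp (σ₁ * Z₁ ω + σ₂ * Z₂ ω) ∧
            a < exp (σ₁ * Z₁ ω) ∧ a < exp (σ₂ * Z₂ ω)}).toReal) := by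
  intro a ha
  obtain ⟨h2, hfpos⟩ := side_ratio P Z₁ Z₂ hZ₁meas hZ₂meas hindep L₁ L₂ β₂
    hL₁pos hL₂pos hL₂ hZ₁ hZ₂ σ₁ σ₂ hσ₁ hσ₂ a ha
  obtain ⟨h1, -⟩ := side_ratio P Z₂ Z₁ hZ₂meas hZ₁meas hindep.symm L₂ L₁ β₁
    hL₂pos hL₁pos hL₁ hZ₂ hZ₁ σ₂ σ₁ hσ₂ hσ₁ a ha
  have hswap : ∀ ω, σ₂ * Z₂ ω + σ₁ * Z₁ ω = σ₁ * Z₁ ω + σ₂ * Z₂ ω := fun ω => add_comm _ _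
  simp only [hswap] at h1
  refine sandwich_ratio ?_ ?_ hfpos h1 h2
  · refine Eventually.of_forall fun u => ?_
    exact ENNReal.toReal_mono (measure_ne_top P _) (measure_mono fun ω h => h.1)
  · filter_upwards [eventually_gt_atTop (0:ℝ)] with u hu
    have hsub : {ω | u < exp (σ₁ * Z₁ ω + σ₂ * Z₂ ω)} ⊆
        {ω | u < exp (σ₁ * Z₁ ω + σ₂ * Z₂ ω) ∧ a < exp (σ₁ * Z₁ ω) ∧ a < exp (σ₂ * Z₂ ω)}
        ∪ ({ω | (u/a) ^ (1/σ₁) < exp (Z₁ ω)} ∪ {ω | (u/a) ^ (1/σ₂) < exp (Z₂ ω)}) := by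
      intro ω hω
      simp only [Set.mem_setOf_eq, Set.mem_union] at hω ⊢
      by_cases hb : a < exp (σ₁ * Z₁ ω)
      · by_cases hc : a < exp (σ₂ * Z₂ ω)
        · exact Or.inl ⟨hω, hb, hc⟩
        · push_neg at hc
          refine Or.inr (Or.inl ?_)
          rw [exp_mul_lt_iff (by positivity) hσ₁]
          rw [Real.exp_add] at hω
          have h3 : u < exp (σ₁ * Z₁ ω) * a :=
            lt_of_lt_of_le hω (mul_le_mul_of_nonneg_left hc (Real.exp_pos _).le)
          exact (div_lt_iff₀ ha).2 h3
      · push_neg at hb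
        refine Or.inr (Or.inr ?_)
        rw [exp_mul_lt_iff (by positivity) hσ₂]
        rw [Real.exp_add] at hω
        have h3 : u < exp (σ₂ * Z₂ ω) * a := by
          refine lt_of_lt_of_le hω ?_
          calc exp (σ₁ * Z₁ ω) * exp (σ₂ * Z₂ ω) ≤ a * exp (σ₂ * Z₂ ω) :=
                mul_le_mul_of_nonneg_right hb (Real.exp_pos _).le
            _ = exp (σ₂ * Z₂ ω) * a := mul_comm _ _
        exact (div_lt_iff₀ ha).2 h3
    have hPS : P {ω | u < exp (σ₁ * Z₁ ω + σ₂ * Z₂ ω)} ≤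
        P {ω | u < exp (σ₁ * Z₁ ω + σ₂ * Z₂ ω) ∧ a < exp (σ₁ * Z₁ ω) ∧ a < exp (σ₂ * Z₂ ω)}
        + (P {ω | (u/a) ^ (1/σ₁) < exp (Z₁ ω)} + P {ω | (u/a) ^ (1/σ₂) < exp (Z₂ ω)}) := by
      refine (measure_mono hsub).trans ?_
      refine (measure_union_le _ _).trans ?_
      exact add_le_add le_rfl (measure_union_le _ _)
    have hne2 : P {ω | (u/a) ^ (1/σ₁) < exp (Z₁ ω)} + P {ω | (u/a) ^ (1/σ₂) < exp (Z₂ ω)} ≠ ⊤ :=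
      ENNReal.add_ne_top.2 ⟨measure_ne_top P _, measure_ne_top P _⟩
    have hmono := ENNReal.toReal_mono (ENNReal.add_ne_top.2 ⟨measure_ne_top P _, hne2⟩) hPS
    rw [ENNReal.toReal_add (measure_ne_top P _) hne2,
      ENNReal.toReal_add (measure_ne_top P _) (measure_ne_top P _)] at hmono
    exact hmono
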